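/- Define sequences (α_j) and (γ_j) by α_0 = 1, α_1 = 1/6, α_j = (4/(5^j-5)) Σ_{ℓ=1}^{j-1} α_{j-ℓ}α_ℓ for j ≥ 2, and γ_0 = 1/2, γ_j = (4/(5^{j+1}-5)) Σ_{ℓ=0}^{j-1} α_{j-ℓ}γ_ℓ for j ≥ 1. Then γ_j = 3 α_{j+1} for all j ≥ 0. -/

import Mathlib

theorem gamma_eq_three_alpha (α : ℕ → ℝ) (hα0 : α 0 = 1) (hα1 : α 1 = 1/6)
    (hαrec : ∀ j ≥ 2, α j = (4 / ((5:ℝ)^j - 5)) * ∑ ℓ ∈ Finset.Ico 1 j, α (j - ℓ) * α ℓ)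
    (γ : ℕ → ℝ) (hγ0 : γ 0 = 1/2)
    (hγrec : ∀ j ≥ 1, γ j = (4 / ((5:ℝ)^(j+1) - 5)) * ∑ ℓ ∈ Finset.range j, α (j - ℓ) * γ ℓ) :
    ∀ j, γ j = 3 * α (j + 1) := by
  intro j
  induction j using Nat.strong_induction_on with
  | _ j ih =>
    match j with
    | 0 => rw [hγ0, hα1]; norm_num
    | Nat.succ n =>
      rw [hγrec (n+1) (by omega), hαrec (n+2) (by omega)]
      have hs : ∑ ℓ ∈ Finset.range (n+1), α (n+1 - ℓ) * γ ℓ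
          = 3 * ∑ ℓ ∈ Finset.Ico 1 (n+2), α (n+2 - ℓ) * α ℓ := by
        rw [Finset.sum_Ico_eq_sum_range, Finset.mul_sum]
        apply Finset.sum_congr (by norm_num)
        intro i hi
        simp only [Finset.mem_range] at hi
        rw [ih i (by omega)]
        have : n + 2 - (1 + i) = n + 1 - i := by omega
        rw [this]
        ring_nf
      rw [hs]
      have : ((5:ℝ)^(n+1+1) - 5) = ((5:ℝ)^(n+2) - 5) := by norm_num
      rw [this]
      ring
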